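/- Let G : ℝ² → ℝ² be defined by G(x,y) = (y(e^{x√2} − 1), y(e^{x√3} − 1)). For sufficiently small ε > 0, G is injective on the set {(x,y) ∈ closedBall(0,ε) : xy ≠ 0}; that is, if G(x,y) = G(x',y') with (x,y),(x',y') in the closed ball of radius ε around 0 in ℝ² and xy ≠ 0, x'y' ≠ 0, then (x,y) = (x',y'). -/

import Mathlib

open Real

private lemma bern (t : ℝ) (ht : 0 < t) (ht1 : t ≠ 1) {c : ℝ} (hc : 1 < c) :
    1 + c * (t - 1) < t ^ c := by
  have := one_add_mul_self_lt_rpow_one_add (s := t - 1) (by linarith) (by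
    intro h; apply ht1; linarith) hc
  simpa using this

/-- numerator of the derivative of `ψ t = (t^c-1)/(t-1)` is positive off `1`. -/
private lemma num_pos {c : ℝ} (hc : 1 < c) {t : ℝ} (ht : 0 < t) (ht1 : t ≠ 1) :
    0 < c * t ^ (c - 1) * (t - 1) - (t ^ c - 1) := by
  -- apply Bernoulli at 1/t
  have hs : (0:ℝ) < 1 / t := by positivity
  have hs1 : (1:ℝ) / t ≠ 1 := by
    intro h; apply ht1; field_simp at h; linarith
  have hb := bern (1 / t) hs hs1 hc
  have h1 : (1 / t : ℝ) ^ c = t ^ (-c) := by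
    rw [one_div, Real.inv_rpow ht.le, ← Real.rpow_neg ht.le]
  rw [h1] at hb
  have htc : (0:ℝ) < t ^ c := Real.rpow_pos_of_pos ht c
  have hmul := mul_lt_mul_of_pos_right hb htc
  have h2 : t ^ (-c) * t ^ c = 1 := by
    rw [← Real.rpow_add ht]; simp
  rw [h2] at hmul
  -- hmul : (1 + c * (1/t - 1)) * t ^ c < 1
  have h4 : (1/t) * t ^ c = t ^ (c - 1) := by
    rw [Real.rpow_sub ht, Real.rpow_one]; ring
  have h6 : t ^ (c - 1) * t = t ^ c := by
    have h := Real.rpow_add ht (c - 1) 1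
    rw [Real.rpow_one] at h
    rw [← h]; norm_num
  have h5 : c * (1 / t - 1) * t ^ c = c * t ^ (c - 1) - c * t ^ c := by
    rw [← h4]; ring
  have h7 : c * (t ^ (c - 1) * t) = c * t ^ c := by rw [h6]
  nlinarith [hmul, h5, h7]

private lemma psi_deriv {c : ℝ} (_hc : 1 < c) {t : ℝ} (ht : 0 < t) (ht1 : t ≠ 1) :
    HasDerivAt (fun s : ℝ => (s ^ c - 1) / (s - 1))
      ((c * t ^ (c - 1) * (t - 1) - (t ^ c - 1) * 1) / (t - 1) ^ 2) t := by
  have h1 : HasDerivAt (fun s : ℝ => s ^ c - 1) (c * t ^ (c - 1)) t := by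
    simpa using (Real.hasDerivAt_rpow_const (x := t) (p := c) (Or.inl ht.ne')).sub_const 1
  have h2 : HasDerivAt (fun s : ℝ => s - 1) 1 t := (hasDerivAt_id t).sub_const 1
  exact h1.div h2 (by intro h; apply ht1; linarith)

private lemma psi_mono {c : ℝ} (hc : 1 < c) {D : Set ℝ} (hD : Convex ℝ D)
    (hsub : ∀ t ∈ D, 0 < t ∧ t ≠ 1) :
    StrictMonoOn (fun s : ℝ => (s ^ c - 1) / (s - 1)) D := by
  apply strictMonoOn_of_deriv_pos hD
  · apply ContinuousOn.div
    · exact ContinuousOn.sub (fun t ht =>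
        (Real.continuousAt_rpow_const t c (Or.inl (hsub t ht).1.ne')).continuousWithinAt)
        continuousOn_const
    · exact (continuousOn_id.sub continuousOn_const)
    · intro t ht; have := (hsub t ht).2; intro h; apply this; linarith
  · intro t ht
    have ht' := hsub t (interior_subset ht)
    have hd := psi_deriv hc ht'.1 ht'.2
    rw [hd.deriv]
    apply div_pos
    · have := num_pos hc ht'.1 ht'.2; linarith
    · have : t - 1 ≠ 0 := by intro h; apply ht'.2; linarith
      positivity

/-- cross-side comparison: ψ t < c for t < 1, ψ t > c for t > 1. -/
private lemma psi_lt {c : ℝ} (hc : 1 < c) {t : ℝ} (ht : 0 < t) (ht1 : t < 1) :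
    (t ^ c - 1) / (t - 1) < c := by
  have hb := bern t ht ht1.ne hc
  rw [div_lt_iff_of_neg (by linarith : t - 1 < 0)]
  nlinarith

private lemma psi_gt {c : ℝ} (hc : 1 < c) {t : ℝ} (ht1 : 1 < t) :
    c < (t ^ c - 1) / (t - 1) := by
  have hb := bern t (by linarith) ht1.ne' hc
  rw [lt_div_iff₀ (by linarith : 0 < t - 1)]
  nlinarith

private lemma key {c : ℝ} (hc : 1 < c) {t t' : ℝ} (ht : 0 < t) (ht' : 0 < t')
    (h1 : t ≠ 1) (h1' : t' ≠ 1)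
    (heq : (t ^ c - 1) * (t' - 1) = (t' ^ c - 1) * (t - 1)) : t = t' := by
  have hne : t - 1 ≠ 0 := by intro h; apply h1; linarith
  have hne' : t' - 1 ≠ 0 := by intro h; apply h1'; linarith
  have hpsi : (t ^ c - 1) / (t - 1) = (t' ^ c - 1) / (t' - 1) := by
    field_simp; linarith [heq]
  rcases lt_or_gt_of_ne h1 with hlt | hgt
  · rcases lt_or_gt_of_ne h1' with hlt' | hgt'
    · have hmono := psi_mono hc (convex_Ioo (0:ℝ) 1)
        (fun s hs => ⟨hs.1, hs.2.ne⟩)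
      exact hmono.injOn ⟨ht, hlt⟩ ⟨ht', hlt'⟩ hpsi
    · exfalso
      have := psi_lt hc ht hlt
      have := psi_gt hc hgt'
      rw [hpsi] at *; linarith
  · rcases lt_or_gt_of_ne h1' with hlt' | hgt'
    · exfalso
      have := psi_gt hc hgt
      have := psi_lt hc ht' hlt'
      rw [hpsi] at *; linarith
    · have hmono := psi_mono hc (convex_Ioi (1:ℝ))
        (fun s hs => ⟨lt_trans one_pos hs, (ne_of_gt hs)⟩)
      exact hmono.injOn hgt hgt' hpsi

/-- For sufficiently small `ε > 0`, the map `G(x,y) = (y(e^{x√2}−1), y(e^{x√3}−1))` is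
injective on the part of the closed ball of radius `ε` around `0` in `ℝ²` where `xy ≠ 0`. -/
theorem stmt10 (G : EuclideanSpace ℝ (Fin 2) → EuclideanSpace ℝ (Fin 2))
    (hG : ∀ p : EuclideanSpace ℝ (Fin 2),
      G p 0 = p 1 * (exp (p 0 * Real.sqrt 2) - 1) ∧
      G p 1 = p 1 * (exp (p 0 * Real.sqrt 3) - 1)) :
    ∃ ε > (0 : ℝ), ∀ p ∈ Metric.closedBall (0 : EuclideanSpace ℝ (Fin 2)) ε,
      ∀ q ∈ Metric.closedBall (0 : EuclideanSpace ℝ (Fin 2)) ε,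
        p 0 * p 1 ≠ 0 → q 0 * q 1 ≠ 0 → G p = G q → p = q := by
  refine ⟨1, one_pos, fun p _ q _ hp hq hpq => ?_⟩
  set c : ℝ := Real.sqrt 3 / Real.sqrt 2 with hcdef
  have h2 : (0:ℝ) < Real.sqrt 2 := Real.sqrt_pos.mpr (by norm_num)
  have h23 : Real.sqrt 2 < Real.sqrt 3 := Real.sqrt_lt_sqrt (by norm_num) (by norm_num)
  have hc : 1 < c := (one_lt_div h2).mpr h23
  have hcmul : Real.sqrt 2 * c = Real.sqrt 3 := by
    rw [hcdef]; field_simp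
  have hp0 : p 0 ≠ 0 := fun h => hp (by rw [h, zero_mul])
  have hp1 : p 1 ≠ 0 := fun h => hp (by rw [h, mul_zero])
  have hq0 : q 0 ≠ 0 := fun h => hq (by rw [h, zero_mul])
  have hq1 : q 1 ≠ 0 := fun h => hq (by rw [h, mul_zero])
  set t : ℝ := exp (p 0 * Real.sqrt 2) with htdef
  set t' : ℝ := exp (q 0 * Real.sqrt 2) with ht'def
  have htpos : 0 < t := exp_pos _
  have ht'pos : 0 < t' := exp_pos _
  have htc : t ^ c = exp (p 0 * Real.sqrt 3) := by
    rw [htdef, ← Real.exp_mul]; rw [mul_assoc, hcmul]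
  have ht'c : t' ^ c = exp (q 0 * Real.sqrt 3) := by
    rw [ht'def, ← Real.exp_mul]; rw [mul_assoc, hcmul]
  have ht1 : t ≠ 1 := by
    rw [htdef, Ne, Real.exp_eq_one_iff, mul_eq_zero]
    push_neg; exact ⟨hp0, h2.ne'⟩
  have ht'1 : t' ≠ 1 := by
    rw [ht'def, Ne, Real.exp_eq_one_iff, mul_eq_zero]
    push_neg; exact ⟨hq0, h2.ne'⟩
  have e0 : p 1 * (t - 1) = q 1 * (t' - 1) := by
    have : G p 0 = G q 0 := by rw [hpq]
    rwa [(hG p).1, (hG q).1] at this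
  have e1 : p 1 * (t ^ c - 1) = q 1 * (t' ^ c - 1) := by
    have : G p 1 = G q 1 := by rw [hpq]
    rw [(hG p).2, (hG q).2] at this
    rwa [htc, ht'c]
  have hcross : (t ^ c - 1) * (t' - 1) = (t' ^ c - 1) * (t - 1) := by
    refine mul_left_cancel₀ hp1 ?_
    calc p 1 * ((t ^ c - 1) * (t' - 1)) = (p 1 * (t ^ c - 1)) * (t' - 1) := by ring
        _ = (q 1 * (t' ^ c - 1)) * (t' - 1) := by rw [e1]
        _ = (q 1 * (t' - 1)) * (t' ^ c - 1) := by ring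
        _ = (p 1 * (t - 1)) * (t' ^ c - 1) := by rw [e0]
        _ = p 1 * ((t' ^ c - 1) * (t - 1)) := by ring
  have htt : t = t' := key hc htpos ht'pos ht1 ht'1 hcross
  have hx : p 0 = q 0 := by
    have := Real.exp_injective (htdef ▸ ht'def ▸ htt)
    exact mul_right_cancel₀ h2.ne' this
  have hy : p 1 = q 1 := by
    have hne : t - 1 ≠ 0 := by intro h; apply ht1; linarith
    have : p 1 * (t - 1) = q 1 * (t - 1) := by rw [e0, htt]
    exact mul_right_cancel₀ hne this
  ext i
  fin_cases i
  · exact hx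
  · exact hy
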